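/- Let V be a vector space over a field K, let F be a field extension of K, let G be a group of K-algebra automorphisms of F, and let W be an F-subspace of F ⊗_K V that is stable under the action of G on the first tensor factor. Then W is spanned over F by elements of W^G, the set of G-fixed elements of W (which lie in F^G ⊗_K V). -/

import Mathlib

open TensorProduct

set_option synthInstance.maxHeartbeats 1000000
set_option maxHeartbeats 1000000

section Aux
variable {K F G ι : Type} [Field K] [Field F] [Algebra K F] [Group G]
variable (ρ : G →* (F ≃ₐ[K] F))

def fixedIF : IntermediateField K F where
  carrier := {c | ∀ g, ρ g c = c}
  mul_mem' := fun {a b} ha hb g => by simp [map_mul, ha g, hb g]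
  one_mem' := fun g => map_one _
  add_mem' := fun {a b} ha hb g => by simp [map_add, ha g, hb g]
  algebraMap_mem' := fun r g => AlgEquiv.commutes _ r
  inv_mem' := fun a ha g => by simp [map_inv₀, ha g]

lemma mem_fixedIF {c : F} : c ∈ fixedIF ρ ↔ ∀ g, ρ g c = c := Iff.rfl

noncomputable def liftE (x : ι →₀ F) (hx : ∀ i, x i ∈ fixedIF ρ) : ι →₀ (fixedIF ρ) where
  support := x.support
  toFun := fun i => ⟨x i, hx i⟩
  mem_support_toFun := fun i => by
    simp only [Finsupp.mem_support_iff]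
    exact ⟨fun h h' => h (by simpa [Subtype.ext_iff] using h'),
      fun h h' => h (by simpa [Subtype.ext_iff] using h')⟩

@[simp] lemma liftE_apply (x : ι →₀ F) (hx) (i : ι) : (liftE ρ x hx i : F) = x i := rfl

@[simp] lemma liftE_support (x : ι →₀ F) (hx) : (liftE ρ x hx).support = x.support := rfl

noncomputable def Jmap : (ι →₀ (fixedIF ρ)) →ₗ[fixedIF ρ] (ι →₀ F) :=
  Finsupp.mapRange.linearMap (Algebra.linearMap (fixedIF ρ) F)

@[simp] lemma Jmap_liftE (x : ι →₀ F) (hx : ∀ i, x i ∈ fixedIF ρ) :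
    Jmap ρ (liftE ρ x hx) = x := by
  ext i
  rfl

section Dual
variable (b : Set (ι →₀ F))

open scoped Classical in
lemma exists_dual
    (li : LinearIndependent F ((↑) : b → (ι →₀ F)))
    (hfix : ∀ x ∈ b, ∀ i : ι, x i ∈ fixedIF ρ) :
    ∃ Φ : (ι →₀ F) → ((ι →₀ F) →ₗ[F] F),
      (∀ x ∈ b, ∀ z ∈ b, Φ x z = if z = x then 1 else 0) ∧
      (∀ x ∈ b, ∀ (g : G) (y : ι →₀ F),
        Φ x (Finsupp.mapRange (ρ g) (map_zero _) y) = ρ g (Φ x y)) := by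
  classical
  set E := fixedIF ρ with hE
  set t' : b → (ι →₀ E) := fun y => liftE ρ y (hfix y y.2) with ht'
  have hJt' : ∀ y : b, Jmap ρ (t' y) = (y : ι →₀ F) := fun y => Jmap_liftE ρ _ _
  have liE : LinearIndependent E ((↑) : b → (ι →₀ F)) := by
    refine li.restrict_scalars ?_
    intro a b h
    apply Subtype.ext
    simpa [Algebra.smul_def] using h
  have li' : LinearIndependent E t' := by
    refine LinearIndependent.of_comp (Jmap ρ) ?_
    have : (Jmap ρ) ∘ t' = ((↑) : b → (ι →₀ F)) := funext hJt'
    rw [this]; exact liE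
  have lir : LinearIndepOn E id (Set.range t') := (linearIndepOn_id_range_iff li'.injective).mpr li'
  let BB : Module.Basis _ E (ι →₀ E) := Module.Basis.extend lir
  have mem : ∀ y : b, t' y ∈ lir.extend (Set.subset_univ _) :=
    fun y => lir.subset_extend _ ⟨y, rfl⟩
  set φ : b → ((ι →₀ E) →ₗ[E] E) := fun y => BB.coord ⟨t' y, mem y⟩ with hφ
  set d : b → ι → E := fun y i => φ y (Finsupp.single i 1) with hd
  refine ⟨fun x => if hx : x ∈ b then
      Finsupp.linearCombination F (fun i => ((d ⟨x, hx⟩ i : F))) else 0, ?_, ?_⟩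
  · intro x hx z hz
    simp only [dif_pos hx]
    have key : ∀ (y : b) (z : b),
        Finsupp.linearCombination F (fun i => ((d y i : F))) (z : ι →₀ F)
          = ((φ y (t' z) : E) : F) := by
      intro y z
      conv_rhs => rw [← Finsupp.sum_single (t' z), map_finsuppSum]
      rw [Finsupp.linearCombination_apply]
      have hsupp : (t' z).support = (z : ι →₀ F).support := rfl
      rw [Finsupp.sum, Finsupp.sum, hsupp]
      rw [AddSubmonoidClass.coe_finset_sum]
      apply Finset.sum_congr rfl
      intro i hi
      rw [← Finsupp.smul_single_one i ((t' z) i), map_smul]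
      simp only [smul_eq_mul, map_mul]
      rfl
    rw [key ⟨x, hx⟩ ⟨z, hz⟩]
    have : φ ⟨x, hx⟩ (t' ⟨z, hz⟩) = if z = x then 1 else 0 := by
      have h1 : t' ⟨z, hz⟩ = BB ⟨t' ⟨z, hz⟩, mem ⟨z, hz⟩⟩ :=
        (Module.Basis.extend_apply_self lir ⟨t' ⟨z, hz⟩, mem ⟨z, hz⟩⟩).symm
      rw [hφ]
      simp only [Module.Basis.coord_apply]
      rw [h1, Module.Basis.repr_self_apply]
      congr 1
      simp only [Subtype.mk.injEq]
      rw [eq_iff_iff]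
      constructor
      · intro h
        exact congrArg Subtype.val (li'.injective h)
      · intro h
        exact congrArg t' (Subtype.ext h)
    rw [this]
    split <;> simp
  · intro x hx g y
    simp only [dif_pos hx]
    rw [Finsupp.linearCombination_apply, Finsupp.linearCombination_apply]
    rw [Finsupp.sum_mapRange_index (by simp)]
    rw [map_finsuppSum]
    apply Finsupp.sum_congr
    intro i _
    have hfixd : ρ g ((d ⟨x, hx⟩ i : F)) = (d ⟨x, hx⟩ i : F) := (d ⟨x, hx⟩ i).2 g
    simp only [smul_eq_mul, map_mul, hfixd]
end Dual
section Aux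
variable {K F G ι : Type} [Field K] [Field F] [Algebra K F] [Group G]
variable (ρ : G →* (F ≃ₐ[K] F))

/-- `Finsupp.mapRange` of the action as an additive monoid hom. -/
noncomputable def mr (g : G) : (ι →₀ F) →+ (ι →₀ F) :=
  Finsupp.mapRange.addMonoidHom (AddMonoidHom.mk' (fun c => ρ g c) (map_add _))

lemma mr_apply (g : G) (x : ι →₀ F) : mr ρ g x = Finsupp.mapRange (ρ g) (map_zero _) x := rfl

lemma mr_smul_fixed (g : G) (c : F) (x : ι →₀ F)
    (hx : Finsupp.mapRange (ρ g) (map_zero _) x = x) :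
    Finsupp.mapRange (ρ g) (map_zero _) (c • x) = (ρ g c) • x := by
  ext i
  have hxi : ρ g (x i) = x i := by
    have := congrArg (fun z : ι →₀ F => z i) hx
    simpa [Finsupp.mapRange_apply] using this
  simp [Finsupp.mapRange_apply, smul_eq_mul, map_mul, hxi]

lemma aux (W : Submodule F (ι →₀ F))
    (hW : ∀ (g : G), ∀ w ∈ W, Finsupp.mapRange (ρ g) (map_zero _) w ∈ W) :
    ∀ (n : ℕ) (S : Finset ι), S.card ≤ n → ∀ w ∈ W, ↑w.support ⊆ (S : Set ι) →
      w ∈ Submodule.span F {u | u ∈ W ∧ (∀ g, Finsupp.mapRange (ρ g) (map_zero _) u = u)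
        ∧ ↑u.support ⊆ (S : Set ι)} := by
  classical
  intro n
  induction n with
  | zero =>
    intro S hS w hw hsupp
    have hS0 : S = ∅ := Finset.card_eq_zero.mp (Nat.le_zero.mp hS)
    have hs2 : w.support ⊆ (∅ : Finset ι) := by
      rw [hS0] at hsupp; exact_mod_cast hsupp
    have : w = 0 := Finsupp.support_eq_empty.mp (Finset.subset_empty.mp hs2)
    simp [this]
  | succ n IH =>
    intro S hS w hw hsupp
    by_cases hw0 : w = 0
    · simp [hw0]
    obtain ⟨j0, hj0⟩ : w.support.Nonempty := Finsupp.support_nonempty_iff.mpr hw0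
    have hj0S : j0 ∈ S := hsupp hj0
    set c : F := w j0 with hc
    have hcne : c ≠ 0 := Finsupp.mem_support_iff.mp hj0
    set w' : ι →₀ F := c⁻¹ • w with hw'def
    have hw' : w' ∈ W := W.smul_mem _ hw
    have hw'supp : ↑w'.support ⊆ (S : Set ι) := by
      rw [hw'def, Finsupp.support_smul_eq (inv_ne_zero hcne)]
      exact hsupp
    have hw'j0 : w' j0 = 1 := by
      rw [hw'def]
      simp [smul_eq_mul, ← hc, inv_mul_cancel₀ hcne]
    set S' : Finset ι := S.erase j0 with hS'
    have hcard : S'.card ≤ n := by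
      rw [hS', Finset.card_erase_of_mem hj0S]
      omega
    set M : Set (ι →₀ F) := {u | u ∈ W ∧ (∀ g, Finsupp.mapRange (ρ g) (map_zero _) u = u)
        ∧ ↑u.support ⊆ (S' : Set ι)} with hM
    have hMspan : ∀ x ∈ W, ↑x.support ⊆ (S' : Set ι) → x ∈ Submodule.span F M :=
      fun x hx hs => IH S' hcard x hx hs
    obtain ⟨bset, hbM, hspan_eq, li⟩ := exists_linearIndependent F M
    -- finiteness of bset
    haveI : Fintype ↥(↑S' : Set ι) := FinsetCoe.fintype S'
    haveI hfd : FiniteDimensional F (Finsupp.supported F F (↑S' : Set ι)) :=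
      LinearEquiv.finiteDimensional (Finsupp.supportedEquivFinsupp (↑S' : Set ι)).symm
    haveI : IsNoetherian F (Finsupp.supported F F (↑S' : Set ι)) :=
      (IsNoetherian.iff_fg (K := F) (V := Finsupp.supported F F (↑S' : Set ι))).mpr hfd
    have hbsupported : ∀ y : bset, (y : ι →₀ F) ∈ Finsupp.supported F F (↑S' : Set ι) :=
      fun y => (hbM y.2).2.2
    have hbfin : bset.Finite := by
      set vv : bset → Finsupp.supported F F (↑S' : Set ι) :=
        fun y => ⟨(y : ι →₀ F), hbsupported y⟩ with hvv
      have livv : LinearIndependent F vv := by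
        refine LinearIndependent.of_comp (Finsupp.supported F F (↑S' : Set ι)).subtype ?_
        have : ((Finsupp.supported F F (↑S' : Set ι)).subtype ∘ vv)
            = ((↑) : bset → (ι →₀ F)) := funext fun y => rfl
        rw [this]; exact li
      have := livv.finite_of_isNoetherian
      exact Set.finite_coe_iff.mp this
    set bfin : Finset (ι →₀ F) := hbfin.toFinset with hbfin_def
    have hbfin_coe : (↑bfin : Set (ι →₀ F)) = bset := hbfin.coe_toFinset
    -- fixed coordinates of elements of bset
    have hcoords : ∀ x ∈ bset, ∀ i : ι, x i ∈ fixedIF ρ := by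
      intro x hx i g
      have := congrArg (fun z : ι →₀ F => z i) ((hbM hx).2.1 g)
      simpa [Finsupp.mapRange_apply] using this
    obtain ⟨Φ, hΦδ, hΦg⟩ := exists_dual ρ bset li hcoords
    -- the candidate fixed vector
    set u : ι →₀ F := w' - ∑ x ∈ bfin, (Φ x w') • x with hu_def
    have hxW : ∀ x ∈ bfin, x ∈ W := by
      intro x hx
      exact (hbM (hbfin_coe ▸ hx)).1
    have huW : u ∈ W := by
      refine W.sub_mem hw' (Submodule.sum_mem _ fun x hx => W.smul_mem _ (hxW x hx))
    -- support of u
    have hxsupp : ∀ x ∈ bfin, ↑x.support ⊆ (S : Set ι) := by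
      intro x hx
      refine subset_trans ((hbM (hbfin_coe ▸ hx)).2.2) ?_
      exact_mod_cast Finset.coe_subset.mpr (Finset.erase_subset _ _)
    have husupp : ↑u.support ⊆ (S : Set ι) := by
      rw [hu_def]
      intro i hi
      rcases Finset.mem_union.mp (Finsupp.support_sub (by exact hi)) with h | h
      · exact hw'supp h
      · have := Finsupp.support_finset_sum h
        rcases Finset.mem_biUnion.mp this with ⟨x, hx, hix⟩
        have := Finsupp.support_smul hix
        exact hxsupp x hx this
    -- fixedness of u
    have hufix : ∀ g, Finsupp.mapRange (ρ g) (map_zero _) u = u := by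
      intro g
      -- D := mapRange g w' - w' lies in span of bset
      have hDW : Finsupp.mapRange (ρ g) (map_zero _) w' - w' ∈ W :=
        W.sub_mem (hW g w' hw') hw'
      have hDsupp : ↑(Finsupp.mapRange (ρ g) (map_zero _) w' - w').support ⊆ (S' : Set ι) := by
        intro i hi
        have hiS : i ∈ S := by
          rcases Finset.mem_union.mp (Finsupp.support_sub (by exact hi)) with h | h
          · exact hw'supp (Finsupp.support_mapRange h)
          · exact hw'supp h
        have hine : i ≠ j0 := by
          intro h
          subst h
          have : (Finsupp.mapRange (ρ g) (map_zero _) w' - w') i = 0 := by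
            simp [Finsupp.mapRange_apply, hw'j0]
          exact Finsupp.mem_support_iff.mp hi this
        exact Finset.mem_coe.mpr (Finset.mem_erase.mpr ⟨hine, hiS⟩)
      have hDspan : Finsupp.mapRange (ρ g) (map_zero _) w' - w'
          ∈ Submodule.span F (↑bfin : Set (ι →₀ F)) := by
        rw [hbfin_coe, hspan_eq]
        exact hMspan _ hDW hDsupp
      obtain ⟨f, -, hf⟩ := Submodule.mem_span_finset.mp hDspan
      -- identify the coefficients f x
      have hcoeff : ∀ x ∈ bfin, f x = ρ g (Φ x w') - Φ x w' := by
        intro x hx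
        have hxb : x ∈ bset := hbfin_coe ▸ hx
        have h1 : Φ x (∑ i ∈ bfin, f i • i) = f x := by
          rw [map_sum]
          have : ∀ i ∈ bfin, Φ x (f i • i) = if i = x then f i else 0 := by
            intro i hi
            rw [map_smul, hΦδ x hxb i (hbfin_coe ▸ hi)]
            by_cases h : i = x <;> simp [h]
          rw [Finset.sum_congr rfl this, Finset.sum_ite_eq' bfin x f]
          simp [hx]
        rw [hf] at h1
        rw [← h1, map_sub, hΦg x hxb g w']
      -- now compute mapRange g u
      have hmr : (mr ρ g) u = (mr ρ g) w' - ∑ x ∈ bfin, (ρ g (Φ x w')) • x := by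
        rw [hu_def, map_sub, map_sum]
        congr 1
        apply Finset.sum_congr rfl
        intro x hx
        rw [mr_apply, mr_smul_fixed ρ g _ _ ((hbM (hbfin_coe ▸ hx)).2.1 g)]
      have hsum : ∑ x ∈ bfin, (ρ g (Φ x w') - Φ x w') • x
          = Finsupp.mapRange (ρ g) (map_zero _) w' - w' := by
        rw [← hf]
        exact Finset.sum_congr rfl (fun x hx => by rw [hcoeff x hx])
      have expand : ∑ x ∈ bfin, (ρ g (Φ x w') - Φ x w') • x
          = (∑ x ∈ bfin, (ρ g (Φ x w')) • x) - ∑ x ∈ bfin, (Φ x w') • x := by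
        rw [← Finset.sum_sub_distrib]
        exact Finset.sum_congr rfl fun x _ => sub_smul _ _ _
      have h : Finsupp.mapRange (ρ g) (map_zero _) w' - w'
          = (∑ x ∈ bfin, (ρ g (Φ x w')) • x) - ∑ x ∈ bfin, (Φ x w') • x :=
        hsum ▸ expand
      rw [← mr_apply, hmr, mr_apply, hu_def]
      rw [sub_eq_sub_iff_sub_eq_sub]
      exact h
    -- conclude
    have humem : u ∈ {u : ι →₀ F | u ∈ W ∧ (∀ g, Finsupp.mapRange (ρ g) (map_zero _) u = u)
        ∧ ↑u.support ⊆ (S : Set ι)} := ⟨huW, hufix, husupp⟩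
    have hxmem : ∀ x ∈ bfin, x ∈ {u : ι →₀ F | u ∈ W ∧
        (∀ g, Finsupp.mapRange (ρ g) (map_zero _) u = u) ∧ ↑u.support ⊆ (S : Set ι)} := by
      intro x hx
      exact ⟨hxW x hx, (hbM (hbfin_coe ▸ hx)).2.1, hxsupp x hx⟩
    have hw'span : w' ∈ Submodule.span F {u : ι →₀ F | u ∈ W ∧
        (∀ g, Finsupp.mapRange (ρ g) (map_zero _) u = u) ∧ ↑u.support ⊆ (S : Set ι)} := by
      have : w' = u + ∑ x ∈ bfin, (Φ x w') • x := by rw [hu_def]; abel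
      rw [this]
      refine Submodule.add_mem _ (Submodule.subset_span humem) ?_
      exact Submodule.sum_mem _ fun x hx =>
        Submodule.smul_mem _ _ (Submodule.subset_span (hxmem x hx))
    have : w = c • w' := by
      rw [hw'def, smul_smul, mul_inv_cancel₀ hcne, one_smul]
    rw [this]
    exact Submodule.smul_mem _ _ hw'span
end Aux

/-- Let `V` be a vector space over a field `K`, let `F/K` be a field extension, let `G` be a
group acting on `F` by `K`-algebra automorphisms, and let `W` be an `F`-subspace of
`F ⊗[K] V` stable under the action of `G` on the first tensor factor.  Then `W` is spanned
over `F` by its `G`-fixed elements. -/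
theorem span_of_invariants
    (K F V G : Type) [Field K] [Field F] [Algebra K F]
    [AddCommGroup V] [Module K V] [Group G]
    (ρ : G →* (F ≃ₐ[K] F))
    (W : Submodule F (F ⊗[K] V))
    (hW : ∀ g : G, ∀ w ∈ W, LinearMap.rTensor V (ρ g).toLinearMap w ∈ W) :
    W = Submodule.span F
      {w : F ⊗[K] V | w ∈ W ∧ ∀ g : G, LinearMap.rTensor V (ρ g).toLinearMap w = w} := by
  classical
  apply le_antisymm
  · intro w hw
    set b := Module.Basis.ofVectorSpace K V with hb
    set B := b.baseChange F with hB
    have hcomm : ∀ (g : G) (x : F ⊗[K] V),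
        B.repr (LinearMap.rTensor V (ρ g).toLinearMap x)
          = Finsupp.mapRange (ρ g) (map_zero _) (B.repr x) := by
      intro g x
      induction x using TensorProduct.induction_on with
      | zero => simp
      | tmul c v =>
        ext i
        rw [LinearMap.rTensor_tmul]
        simp only [Finsupp.mapRange_apply, hB, Module.Basis.baseChange_repr_tmul,
          AlgEquiv.toLinearMap_apply]
        rw [Algebra.smul_def, Algebra.smul_def, map_mul, AlgEquiv.commutes]
      | add x y hx hy =>
        rw [map_add, map_add, map_add, hx, hy]
        ext i
        simp [Finsupp.mapRange_apply]
    set W2 : Submodule F ((Module.Basis.ofVectorSpaceIndex K V) →₀ F) :=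
      W.map (B.repr : (F ⊗[K] V) ≃ₗ[F] _).toLinearMap with hW2def
    have hW2 : ∀ (g : G), ∀ z ∈ W2, Finsupp.mapRange (ρ g) (map_zero _) z ∈ W2 := by
      rintro g z hz
      obtain ⟨x, hx, rfl⟩ := hz
      rw [LinearEquiv.coe_coe, ← hcomm]
      exact ⟨_, hW g x hx, rfl⟩
    have hmem : B.repr w ∈ W2 := ⟨w, hw, rfl⟩
    have := aux ρ W2 hW2 (B.repr w).support.card (B.repr w).support le_rfl
      (B.repr w) hmem subset_rfl
    set T : Set ((Module.Basis.ofVectorSpaceIndex K V) →₀ F) :=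
      {u | u ∈ W2 ∧ (∀ g, Finsupp.mapRange (ρ g) (map_zero _) u = u)
        ∧ (u.support : Set ↑(Module.Basis.ofVectorSpaceIndex K V))
          ⊆ ((B.repr w).support : Set ↑(Module.Basis.ofVectorSpaceIndex K V))} with hT
    have hws : B.repr w ∈ Submodule.span F T := this
    have hsub : T ⊆ {u | (B.repr.symm u : F ⊗[K] V) ∈ Submodule.span F
        {w : F ⊗[K] V | w ∈ W ∧ ∀ g : G, LinearMap.rTensor V (ρ g).toLinearMap w = w}} := by
      rintro z ⟨hzW2, hzfix, -⟩
      refine Submodule.subset_span ⟨?_, ?_⟩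
      · obtain ⟨y, hy, hyz⟩ := hzW2
        have : B.repr.symm z = y := by
          rw [← hyz]; exact B.repr.symm_apply_apply y
        rw [this]; exact hy
      · intro g
        apply B.repr.injective
        rw [hcomm, B.repr.apply_symm_apply, hzfix g]
    have hle : Submodule.span F T ≤ Submodule.comap
        (B.repr.symm : _ ≃ₗ[F] F ⊗[K] V).toLinearMap
        (Submodule.span F
          {w : F ⊗[K] V | w ∈ W ∧ ∀ g : G, LinearMap.rTensor V (ρ g).toLinearMap w = w}) :=
      Submodule.span_le.mpr hsub
    have hfin := hle hws
    simpa using hfin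
  · rw [Submodule.span_le]
    rintro w ⟨hwW, -⟩
    exact hwW
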